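/- Let f^♯: ℝ^d → [0,1], π₀ a probability density, π_δ(z) = π₀(z−δ), and p₀ = E_{z∼π₀}[f^♯(x₀+z)]. Then for any δ ∈ ℝ^d and any λ ≥ 0, E_{z∼π_δ}[f^♯(x₀+z)] ≥ λp₀ − ∫ (λπ₀(z) − π_δ(z))₊ dz. -/

import Mathlib

open MeasureTheory Set

theorem stmt_3 {d : ℕ} (π₀ : (Fin d → ℝ) → ℝ)
    (hmeas : Measurable π₀) (hpos : ∀ z, 0 ≤ π₀ z)
    (hint : Integrable π₀) (hprob : ∫ z, π₀ z = 1)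
    (f : (Fin d → ℝ) → ℝ) (hf : Measurable f) (hf01 : ∀ z, f z ∈ Icc (0:ℝ) 1)
    (x₀ : Fin d → ℝ) (p₀ : ℝ) (hp₀ : p₀ = ∫ z, f (x₀ + z) * π₀ z)
    (δ : Fin d → ℝ) (lam : ℝ) (hlam : 0 ≤ lam) :
    lam * p₀ - ∫ z, max (lam * π₀ z - π₀ (z - δ)) 0 ≤
      ∫ z, f (x₀ + z) * π₀ (z - δ) := by
  have hπδ : Integrable (fun z => π₀ (z - δ)) := hint.comp_sub_right δ
  have hfmeas : Measurable fun z => f (x₀ + z) := hf.comp (measurable_const_add x₀)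
  have hbdd : ∃ C, ∀ z, ‖f (x₀ + z)‖ ≤ C := by
    refine ⟨1, fun z => ?_⟩
    have := hf01 (x₀ + z)
    rw [Real.norm_eq_abs, abs_le]
    exact ⟨by linarith [this.1], this.2⟩
  have hfπ₀ : Integrable (fun z => f (x₀ + z) * π₀ z) :=
    hint.bdd_mul hfmeas.aestronglyMeasurable (Filter.Eventually.of_forall hbdd.choose_spec)
  have hfπδ : Integrable (fun z => f (x₀ + z) * π₀ (z - δ)) :=
    hπδ.bdd_mul hfmeas.aestronglyMeasurable (Filter.Eventually.of_forall hbdd.choose_spec)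
  have hmax : Integrable (fun z => max (lam * π₀ z - π₀ (z - δ)) 0) :=
    ((hint.const_mul lam).sub hπδ).pos_part
  have hlp : lam * p₀ = ∫ z, lam * (f (x₀ + z) * π₀ z) := by
    rw [hp₀, integral_const_mul]
  rw [hlp, ← integral_sub (hfπ₀.const_mul lam) hmax]
  refine integral_mono ((hfπ₀.const_mul lam).sub hmax) hfπδ fun z => ?_
  have ha := hf01 (x₀ + z)
  have hb := hpos (z - δ)
  rcases le_or_gt (π₀ (z - δ)) (lam * π₀ z) with h | h
  · rw [max_eq_left (by linarith)]
    nlinarith [ha.1, ha.2, hb]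
  · rw [max_eq_right (by linarith)]
    nlinarith [ha.1, ha.2, hb]
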